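/- For any directed graph G with a non-empty vertex set and any infinitely separable partition {A_1, A_2} of its vertices, there exists a non-empty subset B of the vertices of G such that (i) B ⊆ A_1 or B ⊆ A_2, and (ii) there are no edges from a vertex in B to a vertex not in B. -/

import Mathlib

/-- Infinitary propositional formulas over signature `σ`:
atoms, conjunctions and disjunctions of (index-)sets of formulas, implication. -/
inductive Formula (σ : Type) : Type 1
  | atom : σ → Formula σ
  | conj : (ι : Type) → (ι → Formula σ) → Formula σ
  | disj : (ι : Type) → (ι → Formula σ) → Formula σ
  | imp : Formula σ → Formula σ → Formula σ

namespace Formula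

variable {σ : Type}

/-- `⊥` is the empty disjunction. -/
def bot : Formula σ := Formula.disj Empty (fun e => e.elim)

/-- Binary conjunction `F ∧ G`. -/
def and (F G : Formula σ) : Formula σ := Formula.conj Bool (fun b => if b then F else G)

/-- Binary disjunction `F ∨ G`. -/
def or (F G : Formula σ) : Formula σ := Formula.disj Bool (fun b => if b then F else G)

/-- Negation `¬F` abbreviates `F → ⊥`. -/
def neg (F : Formula σ) : Formula σ := Formula.imp F bot

/-- Conjunction of a set of atoms. -/
def conjAtoms (S : Set σ) : Formula σ := Formula.conj S (fun p => Formula.atom p.val)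

/-- Satisfaction of an infinitary formula by an interpretation `I ⊆ σ`. -/
def Sat (I : Set σ) : Formula σ → Prop
  | .atom p => p ∈ I
  | .conj _ f => ∀ i, Sat I (f i)
  | .disj _ f => ∃ i, Sat I (f i)
  | .imp F G => Sat I F → Sat I G

open Classical in
/-- The reduct `F^I`. -/
noncomputable def reduct (I : Set σ) : Formula σ → Formula σ
  | .atom p => if p ∈ I then Formula.atom p else bot
  | .conj ι f => Formula.conj ι (fun i => reduct I (f i))
  | .disj ι f => Formula.disj ι (fun i => reduct I (f i))
  | .imp F G => if Sat I (Formula.imp F G) then Formula.imp (reduct I F) (reduct I G) else bot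

/-- `I` is an `A`-stable model of `F`: `I` is minimal w.r.t. `≤_A`
(`J ≤_A I` iff `J ⊆ I` and `I \ J ⊆ A`) among interpretations satisfying `F^I`. -/
def AStable (A : Set σ) (I : Set σ) (F : Formula σ) : Prop :=
  Sat I (reduct I F) ∧ ∀ J : Set σ, J ⊆ I → I \ J ⊆ A → Sat J (reduct I F) → J = I

/-- A stable model is a `σ`-stable model. -/
def Stable (I : Set σ) (F : Formula σ) : Prop := AStable Set.univ I F

/-- The strictly positive atoms `P(F)`. -/
def spos : Formula σ → Set σ
  | .atom p => {p}
  | .conj _ f => ⋃ i, spos (f i)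
  | .disj _ f => ⋃ i, spos (f i)
  | .imp _ H => spos H

/-- `F` is (syntactically) the formula `⊥`, i.e. an empty disjunction. -/
def IsBot : Formula σ → Prop
  | .disj ι _ => IsEmpty ι
  | _ => False

open Classical in
mutual
/-- Positive nonnegated atoms `Pnn(F)`. -/
noncomputable def pnn : Formula σ → Set σ
  | .atom p => {p}
  | .conj _ f => ⋃ i, pnn (f i)
  | .disj _ f => ⋃ i, pnn (f i)
  | .imp G H => if IsBot H then ∅ else nnn G ∪ pnn H

/-- Negative nonnegated atoms `Nnn(F)`. -/
noncomputable def nnn : Formula σ → Set σ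
  | .atom _ => ∅
  | .conj _ f => ⋃ i, nnn (f i)
  | .disj _ f => ⋃ i, nnn (f i)
  | .imp G H => if IsBot H then ∅ else pnn G ∪ nnn H
end

/-- The rules of a formula, as antecedent/consequent pairs. -/
def rules : Formula σ → Set (Formula σ × Formula σ)
  | .atom _ => ∅
  | .conj _ f => ⋃ i, rules (f i)
  | .disj _ f => ⋃ i, rules (f i)
  | .imp G H => insert (G, H) (rules H)

/-- Edge relation of the positive dependency graph `DG_A[F]` (vertex set `A`). -/
noncomputable def DGEdge (F : Formula σ) (A : Set σ) (p q : σ) : Prop :=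
  p ∈ A ∧ q ∈ A ∧ ∃ R ∈ rules F, p ∈ spos R.2 ∧ q ∈ pnn R.1

/-- The atoms occurring in a formula. -/
def atoms : Formula σ → Set σ
  | .atom p => {p}
  | .conj _ f => ⋃ i, atoms (f i)
  | .disj _ f => ⋃ i, atoms (f i)
  | .imp G H => atoms G ∪ atoms H

/-- `G` is a definition for the set `Q` of atoms: a conjunction of formulas
`H ∧ C^∧ → q` with `q ∈ Q`, `C ⊆ Q`, and no atom of `Q` occurring in `H`. -/
def IsDefinition (Q : Set σ) (G : Formula σ) : Prop :=
  ∃ (ι : Type) (g : ι → Formula σ), G = Formula.conj ι g ∧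
    ∀ i, ∃ (H : Formula σ) (C : Set σ) (q : σ),
      q ∈ Q ∧ C ⊆ Q ∧ (∀ p ∈ Q, p ∉ atoms H) ∧
      g i = Formula.imp (Formula.and H (conjAtoms C)) (Formula.atom q)

end Formula

section Graph

variable {V : Type*}

/-- An infinite walk in the directed graph with edge relation `E`. -/
def IsInfWalk (E : V → V → Prop) (w : ℕ → V) : Prop := ∀ i, E (w i) (w (i + 1))

/-- The partition `{P₁, P₂}` is infinitely separable: every infinite walk
visits `P₁` or `P₂` only finitely often. -/
def InfSeparable (E : V → V → Prop) (P1 P2 : Set V) : Prop :=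
  ∀ w : ℕ → V, IsInfWalk E w → {i | w i ∈ P1}.Finite ∨ {i | w i ∈ P2}.Finite

/-- `u` and `v` are in the same strongly connected component:
each is reachable from the other. -/
def SameSCC (E : V → V → Prop) (u v : V) : Prop :=
  Relation.ReflTransGen E u v ∧ Relation.ReflTransGen E v u

/-- The partition `{P₁, P₂}` is separable: every strongly connected
component is contained in `P₁` or in `P₂`. -/
def Separable (E : V → V → Prop) (P1 P2 : Set V) : Prop :=
  ∀ u v, SameSCC E u v → ((u ∈ P1 ∧ v ∈ P1) ∨ (u ∈ P2 ∧ v ∈ P2))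

end Graph

lemma exists_path_of_reflTransGen {V : Type} {E : V → V → Prop} {v u : V}
    (h : Relation.ReflTransGen E v u) :
    ∃ (n : ℕ) (f : ℕ → V), f 0 = v ∧ f n = u ∧ ∀ i < n, E (f i) (f (i + 1)) := by
  induction h with
  | refl => exact ⟨0, fun _ => v, rfl, rfl, fun i hi => absurd hi (Nat.not_lt_zero i)⟩
  | @tail b c hvb hbc ih =>
    obtain ⟨n, f, h0, hn, he⟩ := ih
    refine ⟨n + 1, fun i => if i ≤ n then f i else c, by simp [h0], by simp, ?_⟩
    intro i hi
    rcases lt_or_eq_of_le (Nat.lt_succ_iff.mp hi) with hlt | heq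
    · simp only [Nat.le_of_lt hlt, Nat.succ_le_of_lt hlt, if_true]
      exact he i hlt
    · subst heq
      simp only [le_refl, if_true, Nat.lt_irrefl, Nat.not_succ_le_self, if_false]
      rw [hn]; exact hbc

/-- in a non-empty graph with an infinitely separable partition
`{A₁, A₂}`, there is a non-empty set `B` of vertices, contained in `A₁` or in
`A₂`, with no edges leaving `B`. -/
theorem exists_closed_subset_of_infSeparable {V : Type} [Nonempty V]
    (E : V → V → Prop) (A1 A2 : Set V)
    (hdisj : Disjoint A1 A2) (hcover : A1 ∪ A2 = Set.univ)
    (h : InfSeparable E A1 A2) :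
    ∃ B : Set V, B.Nonempty ∧ (B ⊆ A1 ∨ B ⊆ A2) ∧
      ∀ u ∈ B, ∀ v : V, E u v → v ∈ B := by
  by_contra hB
  push_neg at hB
  -- membership facts from the partition
  have hmem : ∀ x : V, x ∉ A1 → x ∈ A2 := by
    intro x hx
    have : x ∈ A1 ∪ A2 := by rw [hcover]; trivial
    rw [Set.mem_union] at this
    tauto
  have hnot : ∀ x : V, x ∈ A2 → x ∉ A1 := fun x hx2 hx1 =>
    Set.disjoint_left.mp hdisj hx1 hx2
  -- from every vertex we can reach a vertex in the opposite part
  have key : ∀ v : V, ∃ u, Relation.ReflTransGen E v u ∧ (u ∈ A1 ↔ v ∉ A1) := by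
    intro v
    set R : Set V := {u | Relation.ReflTransGen E v u} with hR
    have hRne : R.Nonempty := ⟨v, Relation.ReflTransGen.refl⟩
    have hRclosed : ∀ u ∈ R, ∀ w : V, E u w → w ∈ R := fun u hu w hw =>
      Relation.ReflTransGen.tail hu hw
    have hnsub : ¬ (R ⊆ A1 ∨ R ⊆ A2) := by
      intro hsub
      obtain ⟨u, huR, w, hwE, hwR⟩ := hB R hRne hsub
      exact hwR (hRclosed u huR w hwE)
    push_neg at hnsub
    obtain ⟨hn1, hn2⟩ := hnsub
    by_cases hv : v ∈ A1
    · obtain ⟨u, huR, hu1⟩ := Set.not_subset.mp hn1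
      exact ⟨u, huR, by tauto⟩
    · obtain ⟨u, huR, hu2⟩ := Set.not_subset.mp hn2
      have hu1 : u ∈ A1 := by
        by_contra h'; exact hu2 (hmem u h')
      exact ⟨u, huR, by tauto⟩
  -- paths of length ≥ 1 to the opposite part
  have key2 : ∀ v : V, ∃ (n : ℕ) (g : ℕ → V), 1 ≤ n ∧ g 0 = v ∧
      (∀ i < n, E (g i) (g (i + 1))) ∧ (g n ∈ A1 ↔ v ∉ A1) := by
    intro v
    obtain ⟨u, hvu, hopp⟩ := key v
    obtain ⟨n, g, h0, hn, he⟩ := exists_path_of_reflTransGen hvu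
    have hne : u ≠ v := by
      intro h; subst h; tauto
    have hn1 : 1 ≤ n := by
      rcases Nat.eq_zero_or_pos n with h | h
      · subst h; rw [h0] at hn; exact absurd hn.symm hne
      · exact h
    exact ⟨n, g, hn1, h0, he, by rw [hn]; exact hopp⟩
  choose n g hn1 hg0 hge hgopp using key2
  -- the one-step transition on (segment start, offset) pairs
  set step : V × ℕ → V × ℕ := fun p =>
    if p.2 + 1 < n p.1 then (p.1, p.2 + 1) else (g p.1 (n p.1), 0) with hstep
  set state : ℕ → V × ℕ := fun i => step^[i] (Classical.arbitrary V, 0) with hstate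
  have hsucc : ∀ i, state (i + 1) = step (state i) := by
    intro i
    simp only [hstate, Function.iterate_succ_apply']
  -- invariant: offset stays below segment length
  have hinv : ∀ i, (state i).2 < n (state i).1 := by
    intro i
    induction i with
    | zero => exact hn1 _
    | succ i ih =>
      rw [hsucc i, hstep]
      by_cases hc : (state i).2 + 1 < n (state i).1
      · simp [hc]
      · simp only [hc, if_false]
        exact hn1 _
  set w : ℕ → V := fun i => g (state i).1 (state i).2 with hw
  have hwalk : IsInfWalk E w := by
    intro i
    have hlt := hinv i
    have hE := hge (state i).1 (state i).2 hlt
    have : w (i + 1) = g (state i).1 ((state i).2 + 1) := by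
      rw [hw]
      simp only [hsucc i, hstep]
      by_cases hc : (state i).2 + 1 < n (state i).1
      · simp [hc]
      · have : (state i).2 + 1 = n (state i).1 := by omega
        simp [hc, hg0, this]
    have hwi : w i = g (state i).1 (state i).2 := rfl
    rw [hwi, this]
    exact hE
  -- from a segment start, after j < n steps we are at offset j
  have haux : ∀ (v : V) (i : ℕ), state i = (v, 0) →
      ∀ j, j < n v → state (i + j) = (v, j) := by
    intro v i hi j hj
    induction j with
    | zero => simpa using hi
    | succ j ih =>
      have hij : state (i + j) = (v, j) := ih (by omega)
      have : state (i + j + 1) = step (v, j) := by rw [hsucc, hij]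
      rw [show i + (j + 1) = i + j + 1 from rfl, this, hstep]
      simp [hj]
  have hmile : ∀ (v : V) (i : ℕ), state i = (v, 0) →
      state (i + n v) = (g v (n v), 0) := by
    intro v i hi
    have h1 := hn1 v
    have hpred : state (i + (n v - 1)) = (v, n v - 1) := haux v i hi _ (by omega)
    have : state (i + (n v - 1) + 1) = step (v, n v - 1) := by rw [hsucc, hpred]
    rw [show i + n v = i + (n v - 1) + 1 by omega, this, hstep]
    have h2 : ¬ (n v - 1 + 1 < n v) := by omega
    simp [h2]
  -- the sequence of segment starts and their indices
  set ts : ℕ → ℕ × V := fun k => Nat.rec ((0 : ℕ), Classical.arbitrary V)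
    (fun _ p => (p.1 + n p.2, g p.2 (n p.2))) k with hts
  have hts0 : ts 0 = (0, Classical.arbitrary V) := rfl
  have htsS : ∀ k, ts (k + 1) = ((ts k).1 + n (ts k).2, g (ts k).2 (n (ts k).2)) :=
    fun k => rfl
  have htsinv : ∀ k, state (ts k).1 = ((ts k).2, 0) := by
    intro k
    induction k with
    | zero => rw [hts0]; rfl
    | succ k ih =>
      rw [htsS]
      exact hmile _ _ ih
  have htge : ∀ k, k ≤ (ts k).1 := by
    intro k
    induction k with
    | zero => exact Nat.zero_le _
    | succ k ih =>
      rw [htsS]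
      have := hn1 (ts k).2
      omega
  have hwts : ∀ k, w (ts k).1 = (ts k).2 := by
    intro k
    rw [hw]
    simp only [htsinv k]
    exact hg0 _
  have halt : ∀ k, (ts (k + 1)).2 ∈ A1 ↔ (ts k).2 ∉ A1 := by
    intro k
    rw [htsS]
    exact hgopp _
  -- both parts are visited beyond any bound
  have hvisit1 : ∀ N : ℕ, ∃ i, N ≤ i ∧ w i ∈ A1 := by
    intro N
    by_cases hc : (ts N).2 ∈ A1
    · exact ⟨(ts N).1, htge N, by rw [hwts]; exact hc⟩
    · have h1 : (ts (N + 1)).2 ∈ A1 := (halt N).mpr hc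
      rw [← hwts (N + 1)] at h1
      have h2 := htge (N + 1)
      exact ⟨(ts (N + 1)).1, by omega, h1⟩
  have hvisit2 : ∀ N : ℕ, ∃ i, N ≤ i ∧ w i ∈ A2 := by
    intro N
    by_cases hc : (ts N).2 ∈ A1
    · have h0 : (ts (N + 1)).2 ∉ A1 := fun h' => (halt N).mp h' hc
      have h1 : (ts (N + 1)).2 ∈ A2 := hmem _ h0
      rw [← hwts (N + 1)] at h1
      have h2 := htge (N + 1)
      exact ⟨(ts (N + 1)).1, by omega, h1⟩
    · exact ⟨(ts N).1, htge N, by rw [hwts]; exact hmem _ hc⟩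
  rcases h w hwalk with hf | hf
  · obtain ⟨M, hM⟩ := hf.bddAbove
    obtain ⟨i, hiN, hi1⟩ := hvisit1 (M + 1)
    have := hM hi1
    omega
  · obtain ⟨M, hM⟩ := hf.bddAbove
    obtain ⟨i, hiN, hi2⟩ := hvisit2 (M + 1)
    have := hM hi2
    omega
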